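/- Consequently, for L ⊆ {b, b̄}* and k ≥ 1, the hairpin completion H_k(a*·L·ā^k, ∅) is regular if and only if L is empty. -/

import Mathlib

inductive Letter : Type
  | a | abar | b | bbar
deriving DecidableEq

def lbar : Letter → Letter
  | .a => .abar
  | .abar => .a
  | .b => .bbar
  | .bbar => .b

def barw {α : Type} (bar : α → α) (w : List α) : List α := (w.map bar).reverse

def hairpin {α : Type} (bar : α → α) (k : ℕ) (L₁ L₂ : Language α) : Language α :=
  { w | ∃ γ a β : List α, w = γ ++ a ++ β ++ barw bar a ++ barw bar γ ∧
      a.length = k ∧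
      (γ ++ a ++ β ++ barw bar a ∈ L₁ ∨ a ++ β ++ barw bar a ++ barw bar γ ∈ L₂) }

@[simp] lemma lbar_a : lbar Letter.a = Letter.abar := rfl
@[simp] lemma lbar_abar : lbar Letter.abar = Letter.a := rfl
@[simp] lemma lbar_invol (c : Letter) : lbar (lbar c) = c := by cases c <;> rfl

lemma count_barw (c : Letter) (x : List Letter) :
    (barw lbar x).count c = x.count (lbar c) := by
  rw [barw, List.count_reverse, List.count_eq_countP, List.count_eq_countP,
    List.countP_map]
  apply List.countP_congr
  intro d _
  simp only [Function.comp]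
  constructor
  · intro h
    have : lbar d = c := by simpa using h
    rw [← this, lbar_invol]
    simp
  · intro h
    have : d = lbar c := by simpa using h
    subst this
    simp [lbar_invol]

lemma barw_eq_replicate {x : List Letter} {k : ℕ}
    (h : barw lbar x = List.replicate k Letter.abar) : x = List.replicate k Letter.a := by
  have : x = barw lbar (barw lbar x) := by
    simp [barw, List.map_reverse, List.map_map]
    rw [show (lbar ∘ lbar) = id from funext lbar_invol]
    simp
  rw [this, h]
  simp [barw, List.map_replicate]

-- key counting invariant
lemma count_le_of_mem_hairpin {k : ℕ} (hk : 1 ≤ k) (L : Language Letter)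
    (hL : ∀ w ∈ L, ∀ c ∈ w, c = Letter.b ∨ c = Letter.bbar)
    {w : List Letter}
    (hw : w ∈ hairpin lbar k
        { w | ∃ i : ℕ, ∃ u ∈ L,
            w = List.replicate i Letter.a ++ u ++ List.replicate k Letter.abar }
        (0 : Language Letter)) :
    w.count Letter.abar ≤ w.count Letter.a := by
  obtain ⟨γ, α, β, hw, hlen, hmem⟩ := hw
  rcases hmem with hmem | hmem
  · obtain ⟨i, u, hu, heq⟩ := hmem
    -- suffix of length k
    have hsplit : γ ++ α ++ β = List.replicate i Letter.a ++ u ∧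
        barw lbar α = List.replicate k Letter.abar := by
      apply List.append_inj' _ (by simp [barw, hlen])
      simpa [List.append_assoc] using heq
    have hα : α = List.replicate k Letter.a := barw_eq_replicate hsplit.2
    have hub : u.count Letter.a = 0 ∧ u.count Letter.abar = 0 := by
      constructor <;>
      · rw [List.count_eq_zero]
        intro h
        rcases hL u hu _ h with h' | h' <;> simp at h'
    have hγβ := hsplit.1
    have hca : γ.count Letter.a + (k + β.count Letter.a) = i := by
      have := congrArg (List.count Letter.a) hγβ
      simpa [hα, hub.1, List.count_replicate] using this
    have hcb : γ.count Letter.abar = 0 ∧ β.count Letter.abar = 0 := by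
      have := congrArg (List.count Letter.abar) hγβ
      simp [hα, hub.2, List.count_replicate] at this
      omega
    subst hw
    simp [List.count_append, count_barw, hα, List.count_replicate, hcb.1, hcb.2]
    omega
  · exact absurd hmem (by simp)


theorem hairpin_regular_iff_empty {k : ℕ} (hk : 1 ≤ k) (L : Language Letter)
    (hL : ∀ w ∈ L, ∀ c ∈ w, c = Letter.b ∨ c = Letter.bbar) :
    Language.IsRegular
      (hairpin lbar k
        { w | ∃ i : ℕ, ∃ u ∈ L,
            w = List.replicate i Letter.a ++ u ++ List.replicate k Letter.abar }
        (0 : Language Letter)) ↔ L = 0 := by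
  constructor
  · rintro ⟨σ, hfin, M, hM⟩
    by_contra hne
    have : ∃ u, u ∈ L := by
      by_contra h
      push_neg at h
      exact hne (Set.eq_empty_iff_forall_notMem.mpr h)
    obtain ⟨u, hu⟩ := this
    set n := max (Fintype.card σ) k with hn
    have hkn : k ≤ n := le_max_right _ _
    have hcn : Fintype.card σ ≤ n := le_max_left _ _
    set x := List.replicate n Letter.a ++ u ++ List.replicate n Letter.abar with hx
    have hub : u.count Letter.a = 0 ∧ u.count Letter.abar = 0 := by
      constructor <;>
      · rw [List.count_eq_zero]
        intro h
        rcases hL u hu _ h with h' | h' <;> simp at h'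
    have hxmem : x ∈ hairpin lbar k
        { w | ∃ i : ℕ, ∃ u ∈ L,
            w = List.replicate i Letter.a ++ u ++ List.replicate k Letter.abar }
        (0 : Language Letter) := by
      refine ⟨List.replicate (n - k) Letter.a, List.replicate k Letter.a, u, ?_, by simp, ?_⟩
      · simp only [barw, List.map_replicate, List.reverse_replicate, lbar_a]
        rw [hx]
        rw [show List.replicate n Letter.a
            = List.replicate (n - k) Letter.a ++ List.replicate k Letter.a by
          rw [← List.replicate_add]; congr 1; omega]
        rw [show List.replicate n Letter.abar
            = List.replicate k Letter.abar ++ List.replicate (n - k) Letter.abar by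
          rw [← List.replicate_add]; congr 1; omega]
        simp [List.append_assoc]
      · left
        refine ⟨n, u, hu, ?_⟩
        simp only [barw, List.map_replicate, List.reverse_replicate, lbar_a]
        rw [show List.replicate n Letter.a
            = List.replicate (n - k) Letter.a ++ List.replicate k Letter.a by
          rw [← List.replicate_add]; congr 1; omega]
    rw [← hM] at hxmem
    have hxlen : Fintype.card σ ≤ x.length := by
      have : x.length = n + (u.length + n) := by simp [hx]
      omega
    obtain ⟨s, t, v, hstv, hlen2, htne, hpump⟩ := M.pumping_lemma hxmem hxlen
    have hsv : s ++ v ∈ M.accepts := by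
      have h1 : s ∈ {s} * KStar.kstar ({t} : Language Letter) := by
        rw [Language.mem_mul]
        exact ⟨s, rfl, [], Language.nil_mem_kstar _, by simp⟩
      apply hpump
      refine Language.mem_mul.mpr ?_
      exact ⟨s, h1, v, rfl, rfl⟩
    rw [hM] at hsv
    -- s ++ t consists only of a's
    have hst : s ++ t = List.replicate (s.length + t.length) Letter.a := by
      have h1 : s ++ t = x.take (s.length + t.length) := by
        rw [hstv, ← List.length_append]
        exact List.take_left.symm
      rw [h1, hx, List.append_assoc,
        List.take_append_of_le_length (by simp; omega), List.take_replicate]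
      congr 1
      omega
    have hc1 := congrArg (List.count Letter.a) hst
    have hc2 := congrArg (List.count Letter.abar) hst
    simp [List.count_append, List.count_replicate] at hc1 hc2
    have hcount := count_le_of_mem_hairpin hk L hL hsv
    have hxa : x.count Letter.a = n := by
      simp [hx, List.count_append, List.count_replicate, hub.1]
    have hxb : x.count Letter.abar = n := by
      simp [hx, List.count_append, List.count_replicate, hub.2]
    have h1 : ∀ c : Letter, s.count c + t.count c + v.count c = x.count c := by
      intro c; rw [hstv]; simp [List.count_append]; omega
    have h1a := h1 Letter.a
    have h1b := h1 Letter.abar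
    have hsa := (List.count_le_length : s.count Letter.a ≤ s.length)
    have hta := (List.count_le_length : t.count Letter.a ≤ t.length)
    have htl : 1 ≤ t.length := List.length_pos_iff.mpr htne
    simp only [List.count_append] at hcount
    omega
  · intro hL0
    subst hL0
    refine ⟨Unit, inferInstance, ⟨fun _ _ => (), (), ∅⟩, ?_⟩
    ext w
    simp only [DFA.mem_accepts]
    constructor
    · rintro ⟨⟩
    · rintro ⟨γ, α, β, hw, hlen, hmem | hmem⟩
      · obtain ⟨i, u, hu, -⟩ := hmem
        exact absurd hu (by simp)
      · exact absurd hmem (by simp)
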